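/- Let k ≥ 2, n ≥ 3, and 1 ≤ h < n. There exists an n-ary partial function f on **k** that is neither a partial projection nor a partial constant function and that preserves every h-ary relation on **k**. -/

import Mathlib

/-- An `n`-ary partial function on `Fin k`: a domain together with a value map
(values outside the domain are irrelevant). -/
structure PFunN (k n : ℕ) where
  Dom : Set (Fin n → Fin k)
  toFun : (Fin n → Fin k) → Fin k

/-- An `n`-ary partial function `f` preserves the `h`-ary relation `ρ` if for every
`h × n` matrix `M` all of whose columns are in `ρ` and all of whose rows are in the
domain of `f`, the tuple of values of `f` on the rows belongs to `ρ`. -/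
def PreservesN {k n h : ℕ} (f : PFunN k n) (ρ : Set (Fin h → Fin k)) : Prop :=
  ∀ M : Fin h → Fin n → Fin k,
    (∀ j : Fin n, (fun i => M i j) ∈ ρ) → (∀ i, M i ∈ f.Dom) →
      (fun i => f.toFun (M i)) ∈ ρ

/-- `f` is a partial projection: a subfunction of some projection `e_i^n`. -/
def IsPartialProjection {k n : ℕ} (f : PFunN k n) : Prop :=
  ∃ i : Fin n, ∀ x ∈ f.Dom, f.toFun x = x i

/-- `f` is a partial constant function: it does not take two distinct values. -/
def IsPartialConstant {k n : ℕ} (f : PFunN k n) : Prop :=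
  ∀ x ∈ f.Dom, ∀ y ∈ f.Dom, f.toFun x = f.toFun y

/-- The tuple `v_t^h ∈ 2^h` consisting of `t` ones followed by `h - t` zeros. -/
def vtuple (t h : ℕ) : Fin h → Fin 2 := fun i => if (i : ℕ) < t then 1 else 0

/-- The relation `Δ_t^h = 2^h \ {v_t^h}`. -/
def Delta (t h : ℕ) : Set (Fin h → Fin 2) := { v | v ≠ vtuple t h }

/-- For `k ≥ 2`, `n ≥ 3` and `1 ≤ h < n`, there is an `n`-ary partial
function that is neither a partial projection nor a partial constant function and
preserves every `h`-ary relation on `Fin k`. -/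
theorem exists_partialFun_preserving_all (k n h : ℕ) (hk : 2 ≤ k) (hn : 3 ≤ n)
    (hh1 : 1 ≤ h) (hhn : h < n) :
    ∃ f : PFunN k n, ¬ IsPartialProjection f ∧ ¬ IsPartialConstant f ∧
      ∀ ρ : Set (Fin h → Fin k), PreservesN f ρ := by
  have hk0 : 0 < k := by omega
  have hk1 : 1 < k := by omega
  have hhn' : h + 1 ≤ n := by omega
  set o : Fin k := ⟨0, hk0⟩ with ho
  set l : Fin k := ⟨1, hk1⟩ with hl
  have hol : o ≠ l := by simp [ho, hl, Fin.ext_iff]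
  set x : Fin (h+1) → (Fin n → Fin k) :=
    fun r j => if (j : ℕ) = (r : ℕ) then o else l with hx
  set y : Fin n → Fin k := fun j => if (j : ℕ) < h + 1 then o else l with hy
  have hxy : ∀ r, x r ≠ y := by
    intro r hr
    by_cases h0 : (r : ℕ) = 0
    · have h1h : (1:ℕ) < h + 1 := by omega
      have := congrFun hr ⟨1, by omega⟩
      simp [hx, hy, h0, h1h, ho, hl, Fin.ext_iff] at this
      omega
    · have := congrFun hr ⟨0, by omega⟩
      simp [hx, hy, h0, ho, hl, Fin.ext_iff] at this
      exact h0 this.symm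
  have hxinj : Function.Injective x := by
    intro r r' hrr
    by_contra hne
    have hne' : (r : ℕ) ≠ (r' : ℕ) := fun e => hne (Fin.ext e)
    have := congrFun hrr (Fin.castLE hhn' r)
    simp [hx, hne'] at this
    omega
  refine ⟨⟨{y} ∪ Set.range x, fun z => if z = y then o else l⟩, ?_, ?_, ?_⟩
  · rintro ⟨i, hi⟩
    by_cases hih : (i : ℕ) < h + 1
    · have hmem : x ⟨i, hih⟩ ∈ ({y} ∪ Set.range x : Set (Fin n → Fin k)) :=
        Set.mem_union_right _ ⟨_, rfl⟩
      have := hi _ hmem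
      simp only [if_neg (hxy ⟨i, hih⟩)] at this
      simp [hx] at this
      omega
    · have hmem : y ∈ ({y} ∪ Set.range x : Set (Fin n → Fin k)) :=
        Set.mem_union_left _ rfl
      have := hi _ hmem
      simp only [if_pos rfl] at this
      simp [hy, hih] at this
      omega
  · intro hc
    have h1 : x 0 ∈ ({y} ∪ Set.range x : Set (Fin n → Fin k)) :=
      Set.mem_union_right _ ⟨_, rfl⟩
    have h2 : y ∈ ({y} ∪ Set.range x : Set (Fin n → Fin k)) :=
      Set.mem_union_left _ rfl
    have := hc _ h1 _ h2
    simp only [if_neg (hxy 0), if_pos rfl] at this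
    exact hol this.symm
  · intro ρ M hcol hrow
    have hdom : ∀ i, M i = y ∨ ∃ r, M i = x r := by
      intro i
      rcases hrow i with hy' | ⟨r, hr⟩
      · exact Or.inl hy'
      · exact Or.inr ⟨r, hr.symm⟩
    have hr0 : ∃ r0 : Fin (h+1), ∀ i, M i ≠ x r0 := by
      by_contra hc
      push_neg at hc
      choose g hg using hc
      have hginj : Function.Injective g := by
        intro r r' e
        exact hxinj ((hg r).symm.trans (e ▸ hg r'))
      have := Fintype.card_le_of_injective g hginj
      simp at this
    obtain ⟨r0, hr0⟩ := hr0
    set j0 : Fin n := Fin.castLE hhn' r0 with hj0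
    have key : (fun i => (if M i = y then o else l)) = (fun i => M i j0) := by
      funext i
      rcases hdom i with hiy | ⟨r, hir⟩
      · rw [hiy, if_pos rfl, hy]
        simp [hj0, r0.isLt]
      · rw [hir, if_neg (hxy r), hx]
        have hne : (r0 : ℕ) ≠ (r : ℕ) := by
          intro e
          exact hr0 i (hir.trans (congrArg x (Fin.ext e.symm)))
        simp only [hj0, Fin.coe_castLE, if_neg hne]
    show (fun i => (if M i = y then o else l)) ∈ ρ
    rw [key]
    exact hcol j0
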